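/- arXiv:1710.01170 — 4 statements merged into one kernel-verified Lean document; each statement's English description precedes it below -/
import Mathlib

section
/- Let L ⊂ ℝⁿ be a convex body with 0 ∈ int L and L ⊂ −rL for some r ≥ 1. Let z ∈ (1−C)L for some 0 < C ≤ 1. Then the modulus of convexity of the translated body L_z = L − z satisfies δ_{L_z}(t) ≥ δ_L(Ct) / (1 + (1−C)r) for every 0 ≤ t ≤ 1. -/
open Pointwise

open Topology Filter

/-- The (possibly asymmetric) modulus of convexity of a convex body `M` with `0` in its
interior, measured via the gauge function of `M`. -/
noncomputable def modConv {n : ℕ} (M : Set (EuclideanSpace ℝ (Fin n))) (t : ℝ) : ℝ :=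
  sInf {s : ℝ | ∃ x ∈ M, ∃ y ∈ M, t ≤ gauge M (x - y) ∧ s = 1 - gauge M ((2 : ℝ)⁻¹ • (x + y))}

set_option maxHeartbeats 1000000 in
theorem modConv_translate_ge {n : ℕ} (L : Set (EuclideanSpace ℝ (Fin n)))
    (hLcomp : IsCompact L) (hLconv : Convex ℝ L) (h0 : 0 ∈ interior L)
    (r : ℝ) (hr : 1 ≤ r) (hLr : L ⊆ (-r) • L)
    (C : ℝ) (hC0 : 0 < C) (hC1 : C ≤ 1)
    (z : EuclideanSpace ℝ (Fin n)) (hz : z ∈ (1 - C) • L)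
    (t : ℝ) (ht0 : 0 ≤ t) (ht1 : t ≤ 1) :
    modConv ((fun w => w - z) '' L) t ≥ modConv L (C * t) / (1 + (1 - C) * r) := by
  by_cases hCeq : C = 1
  · subst hCeq
    have hL0 : L.Nonempty := ⟨0, interior_subset h0⟩
    rw [show (1:ℝ) - 1 = 0 by ring, Set.zero_smul_set hL0] at hz
    simp only [Set.mem_zero] at hz
    subst hz
    have himg : (fun w : EuclideanSpace ℝ (Fin n) => w - 0) '' L = L := by simp
    rw [himg]
    norm_num
  have hClt : C < 1 := lt_of_le_of_ne hC1 hCeq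
  set K : ℝ := 1 + (1 - C) * r with hKdef
  clear_value K
  have hrpos : (0:ℝ) < r := lt_of_lt_of_le one_pos hr
  have hK1 : 1 < K := by rw [hKdef]; nlinarith
  have hK0 : (0:ℝ) < K := by linarith
  obtain ⟨l, hl, hzl⟩ := hz
  obtain ⟨b, hb, hlb⟩ := hLr hl
  simp only at hzl hlb
  have hzb : z = (-((1 - C) * r)) • b := by
    rw [← hzl, ← hlb, smul_smul]; ring_nf
  have hLclosed : IsClosed L := hLcomp.isClosed
  have hLnhds : L ∈ 𝓝 (0 : EuclideanSpace ℝ (Fin n)) := mem_interior_iff_mem_nhds.1 h0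
  have habs : Absorbent ℝ L := absorbent_nhds_zero hLnhds
  have hzint : z ∈ interior L := by
    have h := hLconv.combo_interior_self_mem_interior h0 hl hC0 (by linarith : (0:ℝ) ≤ 1 - C)
      (by ring)
    rwa [smul_zero, zero_add, hzl] at h
  set Lz := (fun w : EuclideanSpace ℝ (Fin n) => w - z) '' L with hLzdef
  have hmemLz : ∀ w, w ∈ Lz ↔ w + z ∈ L := by
    intro w
    constructor
    · rintro ⟨a, ha, rfl⟩; simpa using ha
    · intro h; exact ⟨w + z, h, add_sub_cancel_right w z⟩
  have h0Lz : (0 : EuclideanSpace ℝ (Fin n)) ∈ Lz := by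
    rw [hmemLz]; simpa using interior_subset hzint
  have hLzcomp : IsCompact Lz := hLcomp.image (continuous_id.sub continuous_const)
  have hLzclosed : IsClosed Lz := hLzcomp.isClosed
  have hLzconv : Convex ℝ Lz := by
    have : Lz = (fun w : EuclideanSpace ℝ (Fin n) => -z + w) '' L := by
      ext w; simp [Lz, sub_eq_neg_add, add_comm]
    rw [this]
    exact hLconv.translate (-z)
  have hLznhds : Lz ∈ 𝓝 (0 : EuclideanSpace ℝ (Fin n)) := by
    have hopen : IsOpen ((fun w : EuclideanSpace ℝ (Fin n) => w - z) '' interior L) :=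
      (isOpenMap_sub_right z) _ isOpen_interior
    have hmem : (0 : EuclideanSpace ℝ (Fin n)) ∈ (fun w => w - z) '' interior L :=
      ⟨z, hzint, by simp⟩
    exact Filter.mem_of_superset (hopen.mem_nhds hmem)
      (Set.image_mono interior_subset)
  have hLzabs : Absorbent ℝ Lz := absorbent_nhds_zero hLznhds
  -- C • L ⊆ Lz
  have hCL : C • L ⊆ Lz := by
    rintro _ ⟨a, ha, rfl⟩
    rw [hmemLz]
    have h := hLconv ha hl hC0.le (by linarith : (0:ℝ) ≤ 1 - C) (by ring)
    rwa [hzl] at h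
  have hCLnhds : C • L ∈ 𝓝 (0 : EuclideanSpace ℝ (Fin n)) := by
    have := (smul_mem_nhds_smul_iff₀ (G₀ := ℝ) (α := EuclideanSpace ℝ (Fin n))
      hC0.ne').2 hLnhds
    simpa using this
  have hCLabs : Absorbent ℝ (C • L) := absorbent_nhds_zero hCLnhds
  have hgaugeLz_le : ∀ w, gauge Lz w ≤ C⁻¹ * gauge L w := by
    intro w
    have h1 : gauge Lz w ≤ gauge (C • L) w := gauge_mono hCLabs hCL w
    have h2 : gauge (C • L) = C⁻¹ • gauge L := gauge_smul_left_of_nonneg hC0.le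
    rw [h2] at h1
    simpa [smul_eq_mul] using h1
  -- the two sets
  simp only [modConv, ge_iff_le]
  set S1 := {s : ℝ | ∃ x ∈ L, ∃ y ∈ L, C * t ≤ gauge L (x - y) ∧
    s = 1 - gauge L ((2 : ℝ)⁻¹ • (x + y))} with hS1def
  set S2 := {s : ℝ | ∃ x ∈ Lz, ∃ y ∈ Lz, t ≤ gauge Lz (x - y) ∧
    s = 1 - gauge Lz ((2 : ℝ)⁻¹ • (x + y))} with hS2def
  have hS1nonneg : ∀ s ∈ S1, (0:ℝ) ≤ s := by
    rintro s ⟨x, hx, y, hy, -, rfl⟩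
    have hm : (2:ℝ)⁻¹ • (x + y) ∈ L := by
      have h := hLconv hx hy (by norm_num : (0:ℝ) ≤ 2⁻¹) (by norm_num : (0:ℝ) ≤ 2⁻¹)
        (by norm_num)
      rwa [← smul_add] at h
    have := gauge_le_one_of_mem hm
    linarith
  have hbdd1 : BddBelow S1 := ⟨0, hS1nonneg⟩
  have hδ0 : 0 ≤ sInf S1 := Real.sInf_nonneg hS1nonneg
  -- core bound
  have hcore : ∀ s ∈ S2, sInf S1 / K ≤ s := by
    rintro s ⟨x', hx', y', hy', hgt, rfl⟩
    have hx : x' + z ∈ L := (hmemLz x').1 hx'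
    have hy : y' + z ∈ L := (hmemLz y').1 hy'
    have hdiff : C * t ≤ gauge L ((x' + z) - (y' + z)) := by
      have h1 : t ≤ C⁻¹ * gauge L (x' - y') := le_trans hgt (hgaugeLz_le _)
      have h2 : C * t ≤ gauge L (x' - y') := by
        have := mul_le_mul_of_nonneg_left h1 hC0.le
        calc C * t ≤ C * (C⁻¹ * gauge L (x' - y')) := this
          _ = gauge L (x' - y') := by field_simp
      have heq : (x' + z) - (y' + z) = x' - y' := by abel
      rwa [heq]
    set m : EuclideanSpace ℝ (Fin n) := (2:ℝ)⁻¹ • ((x' + z) + (y' + z)) with hmdef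
    have hmL : m ∈ L := by
      have h := hLconv hx hy (by norm_num : (0:ℝ) ≤ 2⁻¹) (by norm_num : (0:ℝ) ≤ 2⁻¹)
        (by norm_num)
      rwa [← smul_add] at h
    have hs1mem : 1 - gauge L m ∈ S1 := ⟨_, hx, _, hy, hdiff, rfl⟩
    have hδle : sInf S1 ≤ 1 - gauge L m := csInf_le hbdd1 hs1mem
    have hδ1 : sInf S1 ≤ 1 := le_trans hδle (by linarith [gauge_nonneg (s := L) m])
    have hmz : (2:ℝ)⁻¹ • (x' + y') = m - z := by
      rw [hmdef]; module
    rw [hmz]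
    -- key claim
    have key : ∀ δ₀ : ℝ, 0 ≤ δ₀ → δ₀ < 1 → gauge L m ≤ 1 - δ₀ →
        gauge Lz (m - z) ≤ 1 - δ₀ / K := by
      intro δ₀ h₀ h₁ hgm
      set d := δ₀ / K with hddef
      clear_value d
      have hd0 : 0 ≤ d := by rw [hddef]; exact div_nonneg h₀ hK0.le
      have hd1 : d < 1 := by
        rw [hddef]; exact lt_of_le_of_lt (div_le_self h₀ hK1.le) h₁
      have hdne : (1:ℝ) - d ≠ 0 := by linarith
      have hane : (0:ℝ) < 1 - δ₀ := by linarith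
      set a : EuclideanSpace ℝ (Fin n) := (1 - δ₀)⁻¹ • m with hadef
      have hga : gauge L a ≤ 1 := by
        rw [hadef, gauge_smul_of_nonneg (inv_nonneg.2 hane.le), smul_eq_mul]
        rw [inv_mul_le_iff₀ hane, mul_one]
        exact hgm
      have haL : a ∈ L := by
        have := (gauge_le_one_iff_mem_closure hLconv hLnhds).1 hga
        rwa [hLclosed.closure_eq] at this
      have hma : m = (1 - δ₀) • a := by
        rw [hadef, smul_inv_smul₀ hane.ne']
      have hcoef : ((1 - d)⁻¹ * (1 - δ₀)) + ((1 - d)⁻¹ * (d * ((1 - C) * r))) = 1 := by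
        have hKd : d * K = δ₀ := by
          rw [hddef]; field_simp
        field_simp
        nlinarith [hKd]
      have hwL : ((1 - d)⁻¹ * (1 - δ₀)) • a + ((1 - d)⁻¹ * (d * ((1 - C) * r))) • b ∈ L :=
        hLconv haL hb
          (mul_nonneg (inv_nonneg.2 (by linarith)) hane.le)
          (mul_nonneg (inv_nonneg.2 (by linarith))
            (mul_nonneg hd0 (mul_nonneg (by linarith) hrpos.le)))
          hcoef
      set w : EuclideanSpace ℝ (Fin n) :=
        ((1 - d)⁻¹ * (1 - δ₀)) • a + ((1 - d)⁻¹ * (d * ((1 - C) * r))) • b with hwdef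
      have h1w : (1 - d) • w = (1 - δ₀) • a + (d * ((1 - C) * r)) • b := by
        rw [hwdef]
        match_scalars <;> field_simp <;> ring
      have hrepr : m - z = (1 - d) • (w - z) := by
        rw [smul_sub, h1w, hma, hzb]; module
      have hwLz : w - z ∈ Lz := by
        rw [hmemLz]; simpa using hwL
      have hgw : gauge Lz (w - z) ≤ 1 := gauge_le_one_of_mem hwLz
      have hfin : gauge Lz (m - z) ≤ 1 - d := by
        calc gauge Lz (m - z) = (1 - d) * gauge Lz (w - z) := by
              rw [hrepr, gauge_smul_of_nonneg (by linarith : (0:ℝ) ≤ 1 - d), smul_eq_mul]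
          _ ≤ (1 - d) * 1 := mul_le_mul_of_nonneg_left hgw (by linarith)
          _ = 1 - d := mul_one _
      exact hfin
    by_cases hcase : sInf S1 < 1
    · have h := key (sInf S1) hδ0 hcase (by linarith)
      linarith
    · have h1 : sInf S1 = 1 := le_antisymm hδ1 (not_lt.1 hcase)
      rw [h1]
      by_contra hcon
      push_neg at hcon
      set g := gauge Lz (m - z) with hgdef
      clear_value g
      have hgK : K * (1 - g) < 1 := by
        have h2 : 1 - g < 1 / K := by linarith
        calc K * (1 - g) < K * (1 / K) := by
              exact mul_lt_mul_of_pos_left h2 hK0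
          _ = 1 := by field_simp
      set δ₀ := max 0 ((K * (1 - g) + 1) / 2) with hδ₀def
      clear_value δ₀
      have h₀ : 0 ≤ δ₀ := by rw [hδ₀def]; exact le_max_left _ _
      have h₁ : δ₀ < 1 := by
        rw [hδ₀def]
        apply max_lt one_pos
        linarith
      have hgm0 : gauge L m ≤ 0 := by linarith
      have hkey := key δ₀ h₀ h₁ (by linarith)
      have hgt' : K * (1 - g) < δ₀ := by
        rw [hδ₀def]
        exact lt_of_lt_of_le (by linarith) (le_max_right _ _)
      have hle' : δ₀ ≤ K * (1 - g) := by
        have h2 : δ₀ / K ≤ 1 - g := by linarith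
        calc δ₀ = K * (δ₀ / K) := by field_simp
          _ ≤ K * (1 - g) := mul_le_mul_of_nonneg_left h2 hK0.le
      linarith
  rcases Set.eq_empty_or_nonempty S2 with h2 | h2
  · have hS1empty : S1 = ∅ := by
      rw [Set.eq_empty_iff_forall_notMem]
      rintro s ⟨x, hx, y, hy, hxy, -⟩
      have : ∃ s', s' ∈ S2 := by
        rcases eq_or_lt_of_le ht0 with hteq | htpos
        · exact ⟨_, 0, h0Lz, 0, h0Lz, by simp [← hteq, gauge_zero], rfl⟩
        · have hLne : L ≠ Set.univ := by
            intro hu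
            have hmem : x - y ∈ (C * t / 2) • L := by
              rw [hu, Set.smul_set_univ₀ (by positivity : C * t / 2 ≠ 0)]
              trivial
            have := gauge_le_of_mem (by positivity : (0:ℝ) ≤ C * t / 2) hmem
            nlinarith
          have hLzne : Lz ≠ Set.univ := by
            intro hu
            apply hLne
            rw [Set.eq_univ_iff_forall]
            intro v
            have : v - z ∈ Lz := hu ▸ Set.mem_univ _
            have := (hmemLz (v - z)).1 this
            simpa using this
          obtain ⟨p, hp⟩ := nonempty_frontier_iff.2 ⟨⟨0, h0Lz⟩, hLzne⟩
          have hpLz : p ∈ Lz := by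
            have := frontier_subset_closure hp
            rwa [hLzclosed.closure_eq] at this
          have hpg : 1 ≤ gauge Lz p := by
            by_contra hlt
            push_neg at hlt
            have : p ∈ interior Lz := (gauge_lt_one_iff_mem_interior hLzconv hLznhds).1 hlt
            rw [frontier, Set.mem_diff] at hp
            exact hp.2 this
          refine ⟨_, p, hpLz, 0, h0Lz, ?_, rfl⟩
          rw [sub_zero]
          exact le_trans ht1 hpg
      obtain ⟨s', hs'⟩ := this
      rw [h2] at hs'
      exact hs'
    rw [h2, hS1empty, Real.sInf_empty]
    norm_num
  · exact le_csInf h2 hcore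
end

section
/- Let L ⊂ ℝⁿ be a convex body with 0 ∈ int L and L ⊂ −rL for some r ≥ 1, and let z ∈ (1−C)L for some 0 < C ≤ 1. Then the modulus of convexity of the polar of the translated body satisfies δ_{(L_z)°}(t) ≥ δ_{L°}(C²t/(1−C+r)) / ((1−C)r + 1) for every 0 ≤ t ≤ 1. -/
open Pointwise

/-- The polar body of a set in Euclidean space. -/
def polarSet {n : ℕ} (M : Set (EuclideanSpace ℝ (Fin n))) : Set (EuclideanSpace ℝ (Fin n)) :=
  {x | ∀ y ∈ M, inner ℝ x y ≤ (1 : ℝ)}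

section Aux

open RealInnerProductSpace

variable {n : ℕ} {K : Set (EuclideanSpace ℝ (Fin n))}

/-- The support function of a set. -/
noncomputable def suppF (K : Set (EuclideanSpace ℝ (Fin n)))
    (u : EuclideanSpace ℝ (Fin n)) : ℝ :=
  sSup ((fun w => ⟪u, w⟫) '' K)

lemma bddAbove_img (hK : IsCompact K) (u : EuclideanSpace ℝ (Fin n)) :
    BddAbove ((fun w => ⟪u, w⟫) '' K) :=
  hK.bddAbove_image ((Continuous.inner continuous_const continuous_id).continuousOn)

lemma le_suppF (hK : IsCompact K) {w : EuclideanSpace ℝ (Fin n)} (hw : w ∈ K)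
    (u : EuclideanSpace ℝ (Fin n)) : ⟪u, w⟫ ≤ suppF K u :=
  le_csSup (bddAbove_img hK u) ⟨w, hw, rfl⟩

lemma suppF_le (hne : K.Nonempty) {u : EuclideanSpace ℝ (Fin n)} {c : ℝ}
    (h : ∀ w ∈ K, ⟪u, w⟫ ≤ c) : suppF K u ≤ c :=
  csSup_le (hne.image _) (by rintro s ⟨v, hv, rfl⟩; exact h v hv)

lemma suppF_exists (hK : IsCompact K) (hne : K.Nonempty) (u : EuclideanSpace ℝ (Fin n)) :
    ∃ w ∈ K, suppF K u = ⟪u, w⟫ := by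
  obtain ⟨w, hw, hmax⟩ := hK.exists_isMaxOn (f := fun w => ⟪u, w⟫) hne
    ((Continuous.inner continuous_const continuous_id).continuousOn)
  refine ⟨w, hw, le_antisymm (csSup_le (hne.image _) ?_)
    (le_csSup (bddAbove_img hK u) ⟨w, hw, rfl⟩)⟩
  rintro s ⟨v, hv, rfl⟩
  exact hmax hv

lemma suppF_smul (hK : IsCompact K) (hne : K.Nonempty) {c : ℝ} (hc : 0 ≤ c)
    (u : EuclideanSpace ℝ (Fin n)) : suppF K (c • u) = c * suppF K u := by
  rcases hc.eq_or_lt with h | h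
  · subst h
    simp only [zero_smul, zero_mul]
    apply le_antisymm
    · exact suppF_le hne fun w hw => by simp
    · obtain ⟨w, hw⟩ := hne
      have := le_suppF hK hw (0 : EuclideanSpace ℝ (Fin n))
      simpa using this
  · apply le_antisymm
    · apply suppF_le hne
      intro w hw
      rw [real_inner_smul_left]
      exact mul_le_mul_of_nonneg_left (le_suppF hK hw u) hc
    · rw [← le_div_iff₀' h]
      apply suppF_le hne
      intro w hw
      rw [le_div_iff₀' h, ← real_inner_smul_left]
      exact le_suppF hK hw (c • u)

lemma polarSet_eq (hK : IsCompact K) (hne : K.Nonempty) :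
    polarSet K = {u | suppF K u ≤ 1} := by
  ext u
  constructor
  · intro hu
    exact suppF_le hne fun w hw => hu w hw
  · intro hu w hw
    exact le_trans (le_suppF hK hw u) hu

lemma gauge_eq_self (p : EuclideanSpace ℝ (Fin n) → ℝ) (hp0 : ∀ u, 0 ≤ p u)
    (hph : ∀ (c : ℝ) u, 0 < c → p (c • u) = c * p u) (u : EuclideanSpace ℝ (Fin n)) :
    gauge {v | p v ≤ 1} u = p u := by
  have hset : {r : ℝ | 0 < r ∧ u ∈ r • {v : EuclideanSpace ℝ (Fin n) | p v ≤ 1}}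
      = {r : ℝ | 0 < r ∧ p u ≤ r} := by
    ext ρ
    simp only [Set.mem_setOf_eq, and_congr_right_iff]
    intro hρ
    rw [Set.mem_smul_set_iff_inv_smul_mem₀ (ne_of_gt hρ), Set.mem_setOf_eq,
      hph ρ⁻¹ u (inv_pos.2 hρ)]
    rw [inv_mul_le_iff₀ hρ, mul_one]
  rw [gauge, hset]
  rcases (hp0 u).eq_or_lt with h0 | h0
  · have : {r : ℝ | 0 < r ∧ p u ≤ r} = Set.Ioi 0 := by
      ext ρ
      simp only [Set.mem_setOf_eq, Set.mem_Ioi]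
      exact ⟨fun h => h.1, fun h => ⟨h, by rw [← h0]; exact h.le⟩⟩
    rw [this, csInf_Ioi, ← h0]
  · have : {r : ℝ | 0 < r ∧ p u ≤ r} = Set.Ici (p u) := by
      ext ρ
      simp only [Set.mem_setOf_eq, Set.mem_Ici]
      exact ⟨fun h => h.2, fun h => ⟨lt_of_lt_of_le h0 h, h⟩⟩
    rw [this, csInf_Ici]

end Aux

open RealInnerProductSpace

set_option maxHeartbeats 2000000 in
theorem modConv_polar_translate_ge {n : ℕ} (L : Set (EuclideanSpace ℝ (Fin n)))
    (hLcomp : IsCompact L) (hLconv : Convex ℝ L) (h0 : 0 ∈ interior L)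
    (r : ℝ) (hr : 1 ≤ r) (hLr : L ⊆ (-r) • L)
    (C : ℝ) (hC0 : 0 < C) (hC1 : C ≤ 1)
    (z : EuclideanSpace ℝ (Fin n)) (hz : z ∈ (1 - C) • L)
    (t : ℝ) (ht0 : 0 ≤ t) (ht1 : t ≤ 1) :
    modConv (polarSet ((fun w => w - z) '' L)) t ≥
      modConv (polarSet L) (C ^ 2 * t / (1 - C + r)) / ((1 - C) * r + 1) := by
  classical
  have h0L : (0 : EuclideanSpace ℝ (Fin n)) ∈ L := interior_subset h0
  have hLne : L.Nonempty := ⟨0, h0L⟩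
  set L' : Set (EuclideanSpace ℝ (Fin n)) := (fun w => w - z) '' L with hL'def
  have hL'comp : IsCompact L' := hLcomp.image (continuous_id.sub continuous_const)
  have hL'ne : L'.Nonempty := hLne.image _
  obtain ⟨z₀, hz₀L, hz₀⟩ := Set.mem_smul_set.1 hz
  have hC1' : (0:ℝ) ≤ 1 - C := by linarith
  have hr0 : (0:ℝ) < r := by linarith
  have hlam : (0:ℝ) < (1-C)*r + 1 := by nlinarith
  have hrc : (0:ℝ) < 1 - C + r := by linarith
  -- basic facts about the support functions
  have h_nonneg : ∀ u, 0 ≤ suppF L u := by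
    intro u
    have := le_suppF hLcomp h0L u
    simpa using this
  have hfh : ∀ u, suppF L' u = suppF L u - ⟪u, z⟫ := by
    intro u
    apply le_antisymm
    · obtain ⟨w', hw', hmax⟩ := suppF_exists hL'comp hL'ne u
      obtain ⟨w, hwL, rfl⟩ := hw'
      rw [hmax, inner_sub_right]
      have := le_suppF hLcomp hwL u
      linarith
    · obtain ⟨w, hw, hmax⟩ := suppF_exists hLcomp hLne u
      rw [hmax]
      have h1 : ⟪u, w - z⟫ ≤ suppF L' u := le_suppF hL'comp ⟨w, hw, rfl⟩ u
      rw [inner_sub_right] at h1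
      linarith
  have hzle : ∀ u, ⟪u, z⟫ ≤ (1-C) * suppF L u := by
    intro u
    rw [← hz₀, real_inner_smul_right]
    exact mul_le_mul_of_nonneg_left (le_suppF hLcomp hz₀L u) hC1'
  have hneg : ∀ u, suppF L (-u) ≤ r * suppF L u := by
    intro u
    apply suppF_le hLne
    intro w hw
    obtain ⟨w', hw'L, hww⟩ := Set.mem_smul_set.1 (hLr hw)
    rw [← hww, real_inner_smul_right, inner_neg_left]
    have h1 := le_suppF hLcomp hw'L u
    nlinarith
  have hzge : ∀ u, -((1-C) * (r * suppF L u)) ≤ ⟪u, z⟫ := by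
    intro u
    rw [← hz₀, real_inner_smul_right]
    have h1 : ⟪-u, z₀⟫ ≤ suppF L (-u) := le_suppF hLcomp hz₀L (-u)
    have h2 := hneg u
    rw [inner_neg_left] at h1
    nlinarith [mul_le_mul_of_nonneg_left (show -⟪u, z₀⟫ ≤ r * suppF L u by linarith) hC1']
  have f_low : ∀ u, C * suppF L u ≤ suppF L' u := by
    intro u
    rw [hfh u]
    have := hzle u
    nlinarith
  have f_nonneg : ∀ u, 0 ≤ suppF L' u := by
    intro u
    have h1 := f_low u
    have h2 := h_nonneg u
    nlinarith
  have f_up : ∀ u, suppF L' u ≤ ((1-C)*r + 1) * suppF L u := by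
    intro u
    rw [hfh u]
    have := hzge u
    nlinarith
  have gaugeP : ∀ u, gauge (polarSet L) u = suppF L u := by
    intro u
    rw [polarSet_eq hLcomp hLne]
    exact gauge_eq_self _ h_nonneg (fun c v hc => suppF_smul hLcomp hLne hc.le v) u
  have gaugeM : ∀ u, gauge (polarSet L') u = suppF L' u := by
    intro u
    rw [polarSet_eq hL'comp hL'ne]
    exact gauge_eq_self _ f_nonneg (fun c v hc => suppF_smul hL'comp hL'ne hc.le v) u
  -- membership bounds
  have hmem : ∀ x, suppF L' x ≤ 1 →
      1 ≤ ((1-C)*r+1) * (1 + ⟪x, z⟫) ∧ C * (1 + ⟪x, z⟫) ≤ 1 ∧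
        suppF L x ≤ 1 + ⟪x, z⟫ ∧ 0 < 1 + ⟪x, z⟫ := by
    intro x hx
    have e0 := hfh x
    have e1 : suppF L x ≤ 1 + ⟪x, z⟫ := by linarith [hx, e0.symm.le]
    have e2 := hzle x
    have e3 := hzge x
    have e4 := h_nonneg x
    have p1 : 1 ≤ ((1-C)*r+1) * (1 + ⟪x, z⟫) := by
      nlinarith [mul_le_mul_of_nonneg_left e1 (mul_nonneg hC1' hr0.le)]
    have p2 : C * (1 + ⟪x, z⟫) ≤ 1 := by
      nlinarith [mul_le_mul_of_nonneg_left e1 hC1']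
    have p4 : 0 < 1 + ⟪x, z⟫ := by nlinarith
    exact ⟨p1, p2, e1, p4⟩
  -- Lemma A
  have lemA : ∀ x y, suppF L' x ≤ 1 → suppF L' y ≤ 1 → 1 + ⟪y,z⟫ ≤ 1 + ⟪x,z⟫ →
      suppF L' (x - y) ≤
        (1 + ⟪y,z⟫) * suppF L ((1+⟪x,z⟫)⁻¹ • x - (1+⟪y,z⟫)⁻¹ • y) := by
    intro x y hx hy hba
    obtain ⟨-, -, -, hαpos⟩ := hmem x hx
    obtain ⟨-, -, -, hβpos⟩ := hmem y hy
    obtain ⟨w', hw', hfw⟩ := suppF_exists hL'comp hL'ne (x - y)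
    obtain ⟨w, hwL, rfl⟩ := hw'
    have hVw := le_suppF hLcomp hwL ((1+⟪x,z⟫)⁻¹ • x - (1+⟪y,z⟫)⁻¹ • y)
    have hA' : ⟪x, w - z⟫ ≤ 1 := le_trans (le_suppF hL'comp ⟨w, hwL, rfl⟩ x) hx
    rw [inner_sub_right] at hA'
    rw [inner_sub_left, real_inner_smul_left, real_inner_smul_left] at hVw
    rw [hfw]
    have hx_y : ⟪x-y, w-z⟫ = ⟪x,w⟫ - ⟪x,z⟫ - ⟪y,w⟫ + ⟪y,z⟫ := by
      rw [inner_sub_left, inner_sub_right, inner_sub_right]; ring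
    rw [hx_y]
    have hXα : ⟪x,w⟫ ≤ 1 + ⟪x,z⟫ := by linarith
    have hrhs : (1 + ⟪y,z⟫) * ((1+⟪x,z⟫)⁻¹ * ⟪x,w⟫ - (1+⟪y,z⟫)⁻¹ * ⟪y,w⟫)
        = (1 + ⟪y,z⟫) * ⟪x,w⟫ / (1+⟪x,z⟫) - ⟪y,w⟫ := by
      rw [mul_sub, mul_inv_cancel_left₀ (ne_of_gt hβpos), div_eq_mul_inv]
      ring
    have h2 : ⟪x,w⟫ - ⟪x,z⟫ + ⟪y,z⟫ ≤ (1 + ⟪y,z⟫) * ⟪x,w⟫ / (1+⟪x,z⟫) := by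
      rw [le_div_iff₀ hαpos]
      nlinarith [mul_nonneg (sub_nonneg.2 hba) (sub_nonneg.2 hXα)]
    calc ⟪x,w⟫ - ⟪x,z⟫ - ⟪y,w⟫ + ⟪y,z⟫
        ≤ (1 + ⟪y,z⟫) * ((1+⟪x,z⟫)⁻¹ * ⟪x,w⟫ - (1+⟪y,z⟫)⁻¹ * ⟪y,w⟫) := by
          rw [hrhs]; linarith
      _ ≤ (1 + ⟪y,z⟫) * suppF L ((1+⟪x,z⟫)⁻¹ • x - (1+⟪y,z⟫)⁻¹ • y) :=
          mul_le_mul_of_nonneg_left hVw hβpos.le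
  -- nonnegativity / bddBelow of the target modConv set
  have hSpnn : ∀ s ∈ {s : ℝ | ∃ x ∈ polarSet L, ∃ y ∈ polarSet L,
      C ^ 2 * t / (1 - C + r) ≤ gauge (polarSet L) (x - y) ∧
      s = 1 - gauge (polarSet L) ((2 : ℝ)⁻¹ • (x + y))}, 0 ≤ s := by
    rintro s ⟨x, hx, y, hy, -, rfl⟩
    rw [polarSet_eq hLcomp hLne] at hx hy
    rw [gaugeP, suppF_smul hLcomp hLne (by norm_num : (0:ℝ) ≤ (2:ℝ)⁻¹)]
    have h1 : suppF L (x + y) ≤ suppF L x + suppF L y := by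
      apply suppF_le hLne
      intro w hw
      rw [inner_add_left]
      exact add_le_add (le_suppF hLcomp hw x) (le_suppF hLcomp hw y)
    have hx1 : suppF L x ≤ 1 := hx
    have hy1 : suppF L y ≤ 1 := hy
    nlinarith
  have hSpbdd : BddBelow {s : ℝ | ∃ x ∈ polarSet L, ∃ y ∈ polarSet L,
      C ^ 2 * t / (1 - C + r) ≤ gauge (polarSet L) (x - y) ∧
      s = 1 - gauge (polarSet L) ((2 : ℝ)⁻¹ • (x + y))} := ⟨0, hSpnn⟩
  have hδ0 : 0 ≤ modConv (polarSet L) (C ^ 2 * t / (1 - C + r)) := by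
    rw [modConv]
    exact Real.sInf_nonneg hSpnn
  -- the main per-pair estimate, stated for the pair ordered so that ⟪y,z⟫ ≤ ⟪x,z⟫
  have main : ∀ x y, suppF L' x ≤ 1 → suppF L' y ≤ 1 → 1 + ⟪y,z⟫ ≤ 1 + ⟪x,z⟫ →
      C * t ≤ (1-C+r) * suppF L' (x - y) →
      modConv (polarSet L) (C ^ 2 * t / (1 - C + r)) / ((1 - C) * r + 1)
        ≤ 1 - suppF L' ((2:ℝ)⁻¹ • (x+y)) := by
    intro x y hx hy hba hBt
    obtain ⟨hαl, hαu, hhx, hαpos⟩ := hmem x hx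
    obtain ⟨hβl, hβu, hhy, hβpos⟩ := hmem y hy
    have hA := lemA x y hx hy hba
    set α : ℝ := 1 + ⟪x,z⟫ with hαdef
    set β : ℝ := 1 + ⟪y,z⟫ with hβdef
    have hαβpos : 0 < α + β := by linarith
    set p : EuclideanSpace ℝ (Fin n) := α⁻¹ • x with hpdef
    set q : EuclideanSpace ℝ (Fin n) := β⁻¹ • y with hqdef
    set ν : ℝ := 2*β/(α+β) with hνdef
    have hν0 : 0 ≤ ν := by positivity
    have hν1 : ν ≤ 1 := by rw [hνdef, div_le_one hαβpos]; linarith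
    -- memberships in the polar of L
    have hXw : ∀ w ∈ L, ⟪x, w⟫ ≤ α := by
      intro w hw
      have h1 := le_suppF hL'comp ⟨w, hw, rfl⟩ x
      rw [inner_sub_right] at h1
      have := le_trans h1 hx
      rw [hαdef]; linarith
    have hYw : ∀ w ∈ L, ⟪y, w⟫ ≤ β := by
      intro w hw
      have h1 := le_suppF hL'comp ⟨w, hw, rfl⟩ y
      rw [inner_sub_right] at h1
      have := le_trans h1 hy
      rw [hβdef]; linarith
    have hpP : p ∈ polarSet L := by
      intro w hw
      show ⟪p, w⟫ ≤ (1:ℝ)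
      rw [hpdef, real_inner_smul_left]
      calc α⁻¹ * ⟪x, w⟫ ≤ α⁻¹ * α :=
            mul_le_mul_of_nonneg_left (hXw w hw) (inv_nonneg.2 hαpos.le)
        _ = 1 := inv_mul_cancel₀ (ne_of_gt hαpos)
    have hqP : q ∈ polarSet L := by
      intro w hw
      show ⟪q, w⟫ ≤ (1:ℝ)
      rw [hqdef, real_inner_smul_left]
      calc β⁻¹ * ⟪y, w⟫ ≤ β⁻¹ * β :=
            mul_le_mul_of_nonneg_left (hYw w hw) (inv_nonneg.2 hβpos.le)
        _ = 1 := inv_mul_cancel₀ (ne_of_gt hβpos)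
    have hy₁P : (1-ν)•p + ν•q ∈ polarSet L := by
      intro w hw
      have e1 : α⁻¹ * ⟪x, w⟫ ≤ 1 := by
        calc α⁻¹ * ⟪x, w⟫ ≤ α⁻¹ * α :=
              mul_le_mul_of_nonneg_left (hXw w hw) (inv_nonneg.2 hαpos.le)
          _ = 1 := inv_mul_cancel₀ (ne_of_gt hαpos)
      have e2 : β⁻¹ * ⟪y, w⟫ ≤ 1 := by
        calc β⁻¹ * ⟪y, w⟫ ≤ β⁻¹ * β :=
              mul_le_mul_of_nonneg_left (hYw w hw) (inv_nonneg.2 hβpos.le)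
          _ = 1 := inv_mul_cancel₀ (ne_of_gt hβpos)
      show ⟪(1-ν)•p + ν•q, w⟫ ≤ (1:ℝ)
      rw [hpdef, hqdef]
      simp only [inner_add_left, real_inner_smul_left]
      nlinarith [mul_le_mul_of_nonneg_left e1 (show (0:ℝ) ≤ 1 - ν by linarith),
        mul_le_mul_of_nonneg_left e2 hν0]
    -- vector identities
    have hid1 : p - ((1-ν)•p + ν•q) = ν • (p - q) := by module
    have hα0' : α ≠ 0 := ne_of_gt hαpos
    have hβ0' : β ≠ 0 := ne_of_gt hβpos
    have hαβ0' : α + β ≠ 0 := ne_of_gt hαβpos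
    have hmid : (2:ℝ)⁻¹ • (p + ((1-ν)•p + ν•q))
        = ((α+β)/2)⁻¹ • ((2:ℝ)⁻¹ • (x + y)) := by
      rw [hpdef, hqdef, hνdef]
      match_scalars
      · field_simp
        ring
      · field_simp
    -- the gauge of the difference
    have hgd : gauge (polarSet L) (p - ((1-ν)•p + ν•q)) = ν * suppF L (p - q) := by
      rw [hid1, gaugeP, suppF_smul hLcomp hLne hν0]
    have hpq0 : 0 ≤ suppF L (p - q) := h_nonneg _
    have hν' : ν * (α+β) = 2*β := by
      rw [hνdef]; field_simp
    have hsb : C ^ 2 * t / (1 - C + r) ≤ ν * suppF L (p - q) := by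
      rw [div_le_iff₀ hrc]
      have k1 : C*t ≤ β * suppF L (p - q) * (1-C+r) := by
        nlinarith [mul_le_mul_of_nonneg_left hA (le_of_lt hrc)]
      have k2 : ν * suppF L (p-q) * (1-C+r) * (α+β)
          = 2*(β * suppF L (p-q) * (1-C+r)) := by
        linear_combination (suppF L (p-q) * (1-C+r)) * hν'
      have k3 : C^2*t*(α+β) ≤ 2*(C*t) := by
        nlinarith [mul_nonneg hC0.le ht0]
      have k4 : C^2*t*(α+β) ≤ ν * suppF L (p-q) * (1-C+r) * (α+β) := by linarith
      exact le_of_mul_le_mul_right k4 hαβpos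
    -- the element of the modConv set of the polar of L
    have hσpos : 0 < (α+β)/2 := by linarith
    have hδle : modConv (polarSet L) (C ^ 2 * t / (1 - C + r))
        ≤ 1 - ((α+β)/2)⁻¹ * suppF L ((2:ℝ)⁻¹ • (x+y)) := by
      rw [modConv]
      apply csInf_le hSpbdd
      refine ⟨p, hpP, (1-ν)•p + ν•q, hy₁P, ?_, ?_⟩
      · rw [hgd]; exact hsb
      · rw [hmid, gaugeP, suppF_smul hLcomp hLne (inv_nonneg.2 hσpos.le)]
    -- final arithmetic
    have hfm : suppF L' ((2:ℝ)⁻¹ • (x+y))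
        = suppF L ((2:ℝ)⁻¹ • (x+y)) - ((α+β)/2 - 1) := by
      rw [hfh]
      have : ⟪(2:ℝ)⁻¹ • (x+y), z⟫ = (α+β)/2 - 1 := by
        rw [real_inner_smul_left, inner_add_left, hαdef, hβdef]
        ring
      rw [this]
    have hls : 1 ≤ ((1-C)*r+1) * ((α+β)/2) := by nlinarith [hαl, hβl]
    rw [div_le_iff₀ hlam]
    have hinv : ((α+β)/2) * ((α+β)/2)⁻¹ = 1 := mul_inv_cancel₀ (ne_of_gt hσpos)
    have k1 : ((α+β)/2) * modConv (polarSet L) (C ^ 2 * t / (1 - C + r))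
        ≤ (α+β)/2 - suppF L ((2:ℝ)⁻¹ • (x+y)) := by
      have h5 := mul_le_mul_of_nonneg_left hδle hσpos.le
      have e : (α+β)/2 * (((α+β)/2)⁻¹ * suppF L ((2:ℝ)⁻¹ • (x+y)))
          = suppF L ((2:ℝ)⁻¹ • (x+y)) := by
        rw [← mul_assoc, hinv, one_mul]
      nlinarith [h5, e]
    nlinarith [k1, hδ0, hls, hlam, hfm,
      mul_le_mul_of_nonneg_left k1 hlam.le,
      mul_nonneg (sub_nonneg.2 hls) hδ0]
  -- the per-element estimate for arbitrary pairs
  have hcore : ∀ s ∈ {s : ℝ | ∃ x ∈ polarSet L', ∃ y ∈ polarSet L',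
      t ≤ gauge (polarSet L') (x - y) ∧
      s = 1 - gauge (polarSet L') ((2 : ℝ)⁻¹ • (x + y))},
      modConv (polarSet L) (C ^ 2 * t / (1 - C + r)) / ((1 - C) * r + 1) ≤ s := by
    rintro s ⟨x, hx, y, hy, hts, rfl⟩
    rw [polarSet_eq hL'comp hL'ne] at hx hy
    replace hx : suppF L' x ≤ 1 := hx
    replace hy : suppF L' y ≤ 1 := hy
    rw [gaugeM] at hts
    rw [gaugeM]
    by_cases hc : ⟪y, z⟫ ≤ ⟪x, z⟫
    · apply main x y hx hy (by linarith)
      nlinarith [hts, ht0]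
    · push_neg at hc
      have hswap := main y x hy hx (by linarith)
      rw [add_comm y x] at hswap
      apply hswap
      -- need : C * t ≤ (1-C+r) * suppF L' (y - x)
      have e1 := hfh (x - y)
      have e2 := hfh (y - x)
      have e3 : suppF L (x - y) ≤ r * suppF L (y - x) := by
        have := hneg (y - x)
        rw [neg_sub] at this
        exact this
      have e4 : ⟪y - x, z⟫ ≤ (1-C) * suppF L (y - x) := hzle _
      have e5 : ⟪x - y, z⟫ = -⟪y - x, z⟫ := by
        rw [← inner_neg_left, neg_sub]
      have slack1 : (0:ℝ) ≤ r * suppF L (y-x) + ⟪y - x, z⟫ - t := by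
        nlinarith [hts, e1, e3, e5]
      nlinarith [mul_nonneg hC0.le slack1,
        mul_nonneg (show (0:ℝ) ≤ 1 + r by linarith) (sub_nonneg.2 e4)]
  -- assemble
  rw [ge_iff_le, modConv]
  by_cases hSne : {s : ℝ | ∃ x ∈ polarSet L', ∃ y ∈ polarSet L',
      t ≤ gauge (polarSet L') (x - y) ∧
      s = 1 - gauge (polarSet L') ((2 : ℝ)⁻¹ • (x + y))}.Nonempty
  · exact le_csInf hSne hcore
  · -- the set is empty
    show modConv (polarSet L) (C ^ 2 * t / (1 - C + r)) / ((1 - C) * r + 1) ≤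
      sInf {s : ℝ | ∃ x ∈ polarSet L', ∃ y ∈ polarSet L',
        t ≤ gauge (polarSet L') (x - y) ∧
        s = 1 - gauge (polarSet L') ((2 : ℝ)⁻¹ • (x + y))}
    rw [Set.not_nonempty_iff_eq_empty.1 hSne, Real.sInf_empty]
    have hf'0 : suppF L' 0 = 0 := by
      have := suppF_smul hL'comp hL'ne (le_refl (0:ℝ)) 0
      simpa using this
    have h00 : (0 : EuclideanSpace ℝ (Fin n)) ∈ polarSet L' := by
      rw [polarSet_eq hL'comp hL'ne]
      show suppF L' 0 ≤ 1
      rw [hf'0]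
      norm_num
    have ht' : 0 < t := by
      rcases ht0.eq_or_lt with h | h
      · exfalso
        apply hSne
        refine ⟨1 - gauge (polarSet L') ((2 : ℝ)⁻¹ • (0 + 0)), 0, h00, 0, h00, ?_, rfl⟩
        rw [gaugeM, sub_self, hf'0, ← h]
      · exact h
    have hf0 : ∀ u, suppF L' u ≤ 0 := by
      by_contra hcon
      push_neg at hcon
      obtain ⟨u, hu⟩ := hcon
      apply hSne
      have hfx : suppF L' ((suppF L' u)⁻¹ • u) = 1 := by
        rw [suppF_smul hL'comp hL'ne (inv_nonneg.2 hu.le) u]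
        exact inv_mul_cancel₀ (ne_of_gt hu)
      have hxm : (suppF L' u)⁻¹ • u ∈ polarSet L' := by
        rw [polarSet_eq hL'comp hL'ne]
        show suppF L' _ ≤ 1
        rw [hfx]
      refine ⟨1 - gauge (polarSet L') ((2 : ℝ)⁻¹ • ((suppF L' u)⁻¹ • u + 0)),
        (suppF L' u)⁻¹ • u, hxm, 0, h00, ?_, rfl⟩
      rw [gaugeM, sub_zero, hfx]
      exact ht1
    have hh0 : ∀ u, suppF L u = 0 := by
      intro u
      have h1 := f_low u
      have h2 := hf0 u
      have h3 := h_nonneg u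
      nlinarith
    have hs0pos : 0 < C ^ 2 * t / (1 - C + r) := by positivity
    have hempty : {s : ℝ | ∃ x ∈ polarSet L, ∃ y ∈ polarSet L,
        C ^ 2 * t / (1 - C + r) ≤ gauge (polarSet L) (x - y) ∧
        s = 1 - gauge (polarSet L) ((2 : ℝ)⁻¹ • (x + y))} = ∅ := by
      rw [Set.eq_empty_iff_forall_notMem]
      rintro s ⟨x, hx, y, hy, hcond, rfl⟩
      rw [gaugeP, hh0] at hcond
      linarith
    rw [modConv, hempty, Real.sInf_empty, zero_div]
end

section
/- Let L ⊂ ℝⁿ be a convex body with 0 ∈ int L and L ⊂ −nL, and let z ∈ (n/(n+1))L. Then δ_{(L_z)°}(t) ≥ δ_{L°}(t/(4n³)) / (2n) for every 0 ≤ t ≤ 1. -/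
open Pointwise

namespace MCAux

variable {n : ℕ}

noncomputable def hsup (M : Set (EuclideanSpace ℝ (Fin n))) (x : EuclideanSpace ℝ (Fin n)) : ℝ :=
  sSup ((fun y => (inner ℝ x y : ℝ)) '' M)

lemma cont_inner (x : EuclideanSpace ℝ (Fin n)) :
    Continuous (fun y : EuclideanSpace ℝ (Fin n) => (inner ℝ x y : ℝ)) :=
  continuous_const.inner continuous_id

lemma inner_le_hsup {M : Set (EuclideanSpace ℝ (Fin n))} (hM : IsCompact M)
    {x y : EuclideanSpace ℝ (Fin n)} (hy : y ∈ M) : (inner ℝ x y : ℝ) ≤ hsup M x :=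
  le_csSup (hM.image (cont_inner x)).bddAbove ⟨y, hy, rfl⟩

lemma hsup_le {M : Set (EuclideanSpace ℝ (Fin n))} (hne : M.Nonempty)
    {x : EuclideanSpace ℝ (Fin n)} {c : ℝ}
    (h : ∀ y ∈ M, (inner ℝ x y : ℝ) ≤ c) : hsup M x ≤ c :=
  csSup_le (hne.image _) (by rintro _ ⟨y, hy, rfl⟩; exact h y hy)

lemma hsup_attain {M : Set (EuclideanSpace ℝ (Fin n))} (hM : IsCompact M) (hne : M.Nonempty)
    (x : EuclideanSpace ℝ (Fin n)) : ∃ p ∈ M, hsup M x = (inner ℝ x p : ℝ) := by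
  obtain ⟨p, hp, hmax⟩ := hM.exists_isMaxOn hne (cont_inner x).continuousOn
  exact ⟨p, hp, le_antisymm (hsup_le hne fun y hy => hmax hy) (inner_le_hsup hM hp)⟩

lemma hsup_zero {M : Set (EuclideanSpace ℝ (Fin n))} (hne : M.Nonempty) :
    hsup M 0 = 0 := by
  have h : (fun y : EuclideanSpace ℝ (Fin n) => (inner ℝ (0 : EuclideanSpace ℝ (Fin n)) y : ℝ))
      = fun _ => 0 := by
    funext y; simp
  rw [hsup, h, hne.image_const, csSup_singleton]

lemma hsup_smul {M : Set (EuclideanSpace ℝ (Fin n))} (hM : IsCompact M) (hne : M.Nonempty)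
    {c : ℝ} (hc : 0 ≤ c) (x : EuclideanSpace ℝ (Fin n)) :
    hsup M (c • x) = c * hsup M x := by
  rcases hc.eq_or_lt with rfl | hc
  · rw [zero_smul, hsup_zero hne, zero_mul]
  · refine le_antisymm (hsup_le hne fun y hy => ?_) ?_
    · rw [real_inner_smul_left]
      exact mul_le_mul_of_nonneg_left (inner_le_hsup hM hy) hc.le
    · obtain ⟨p, hp, hep⟩ := hsup_attain hM hne x
      rw [hep, ← real_inner_smul_left]
      exact inner_le_hsup hM hp

lemma hsup_add_le {M : Set (EuclideanSpace ℝ (Fin n))} (hM : IsCompact M) (hne : M.Nonempty)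
    (P Q : EuclideanSpace ℝ (Fin n)) : hsup M (P + Q) ≤ hsup M P + hsup M Q :=
  hsup_le hne fun y hy => by
    rw [inner_add_left]
    exact add_le_add (inner_le_hsup hM hy) (inner_le_hsup hM hy)

lemma hsup_comb {M : Set (EuclideanSpace ℝ (Fin n))} (hM : IsCompact M) (hne : M.Nonempty)
    {c₁ c₂ : ℝ} (h1 : 0 ≤ c₁) (h2 : 0 ≤ c₂) (P Q : EuclideanSpace ℝ (Fin n)) :
    hsup M (c₁ • P + c₂ • Q) ≤ c₁ * hsup M P + c₂ * hsup M Q :=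
  le_trans (hsup_add_le hM hne _ _)
    (by rw [hsup_smul hM hne h1, hsup_smul hM hne h2])

lemma mem_polar_iff {M : Set (EuclideanSpace ℝ (Fin n))} (hM : IsCompact M) (hne : M.Nonempty)
    (P : EuclideanSpace ℝ (Fin n)) : P ∈ polarSet M ↔ hsup M P ≤ 1 :=
  ⟨fun h => hsup_le hne h, fun h y hy => (inner_le_hsup hM hy).trans h⟩

lemma sInf_aux {c : ℝ} (hc : 0 ≤ c) : sInf {r : ℝ | 0 < r ∧ c ≤ r} = c := by
  rcases hc.eq_or_lt with rfl | hc
  · have h : {r : ℝ | 0 < r ∧ (0:ℝ) ≤ r} = Set.Ioi 0 := by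
      ext r
      constructor
      · rintro ⟨h, _⟩; exact h
      · intro h; exact ⟨h, le_of_lt h⟩
    rw [h, csInf_Ioi]
  · have h : {r : ℝ | 0 < r ∧ c ≤ r} = Set.Ici c := by
      ext r
      constructor
      · rintro ⟨_, h⟩; exact h
      · intro h; exact ⟨lt_of_lt_of_le hc h, h⟩
    rw [h, csInf_Ici]

lemma gauge_polar {M : Set (EuclideanSpace ℝ (Fin n))} (hM : IsCompact M) (hne : M.Nonempty)
    {x : EuclideanSpace ℝ (Fin n)} (hpos : 0 ≤ hsup M x) :
    gauge (polarSet M) x = hsup M x := by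
  have hset : {r : ℝ | 0 < r ∧ x ∈ r • polarSet M} = {r : ℝ | 0 < r ∧ hsup M x ≤ r} := by
    ext r
    simp only [Set.mem_setOf_eq]
    refine and_congr_right fun hr => ?_
    rw [Set.mem_smul_set_iff_inv_smul_mem₀ (ne_of_gt hr), mem_polar_iff hM hne,
        hsup_smul hM hne (inv_nonneg.2 hr.le)]
    constructor
    · intro h
      have h2 := mul_le_mul_of_nonneg_left h hr.le
      rwa [← mul_assoc, mul_inv_cancel₀ (ne_of_gt hr), one_mul, mul_one] at h2
    · intro h
      have h2 := mul_le_mul_of_nonneg_left h (inv_nonneg.2 hr.le)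
      rwa [inv_mul_cancel₀ (ne_of_gt hr)] at h2
  rw [gauge, hset, sInf_aux hpos]

lemma hsup_translate {M : Set (EuclideanSpace ℝ (Fin n))} (hM : IsCompact M) (hne : M.Nonempty)
    (z x : EuclideanSpace ℝ (Fin n)) :
    hsup ((fun w => w - z) '' M) x = hsup M x - (inner ℝ x z : ℝ) := by
  have hMc : IsCompact ((fun w => w - z) '' M) :=
    hM.image (continuous_id.sub continuous_const)
  refine le_antisymm (hsup_le (hne.image _) ?_) ?_
  · rintro _ ⟨y, hy, rfl⟩
    rw [inner_sub_right]
    exact sub_le_sub_right (inner_le_hsup hM hy) _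
  · obtain ⟨p, hp, hep⟩ := hsup_attain hM hne x
    rw [hep, show (inner ℝ x p : ℝ) - inner ℝ x z = inner ℝ x (p - z) from (inner_sub_right x p z).symm]
    exact inner_le_hsup hMc ⟨p, hp, rfl⟩

lemma vec_id1 (x y : EuclideanSpace ℝ (Fin n)) (a d : ℝ) (ha : a ≠ 0) (hd : d ≠ 0) :
    (2:ℝ)⁻¹ • (x + y) = a • ((2:ℝ)⁻¹ • (a⁻¹ • x + d⁻¹ • y)) + ((d - a)/2) • (d⁻¹ • y) := by
  match_scalars
  · field_simp
  · field_simp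
    ring

lemma vec_id2 (x y : EuclideanSpace ℝ (Fin n)) (a d : ℝ) (ha : a ≠ 0) (hd : d ≠ 0) :
    x - y = a • (a⁻¹ • x - d⁻¹ • y) + ((a - d)/d) • y := by
  match_scalars
  · field_simp
  · field_simp
    ring

lemma vec_id3 (x y : EuclideanSpace ℝ (Fin n)) (a d : ℝ) (ha : a ≠ 0) (hd : d ≠ 0) :
    x - y = a • (a⁻¹ • x - d⁻¹ • y) + ((d - a)/d) • (-y) := by
  match_scalars
  · field_simp
  · field_simp
    ring

lemma scal_id1 (la ld : ℝ) (ha : 1 + la ≠ 0) (hd : 1 + ld ≠ 0) :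
    (1+ld)⁻¹ * ld - (1+la)⁻¹ * la = (1+la)⁻¹ - (1+ld)⁻¹ := by
  field_simp
  ring

lemma scal_id2 (a d : ℝ) (ha : a ≠ 0) (hd : d ≠ 0) :
    a⁻¹ - d⁻¹ = (d - a)/(a*d) := by
  field_simp

lemma scal_id3 (c d : ℝ) (hd : d ≠ 0) : (c/d)*d = c :=
  div_mul_cancel₀ c hd

lemma scal_id4 (c d m : ℝ) (hd : d ≠ 0) : (c/d)*(m*d) = m*c := by
  field_simp

end MCAux

open MCAux

set_option maxHeartbeats 8000000 in
theorem key {n : ℕ} (hn : 1 ≤ n) (L : Set (EuclideanSpace ℝ (Fin n)))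
    (hLcomp : IsCompact L) (hLconv : Convex ℝ L) (h0 : 0 ∈ interior L)
    (hLn : L ⊆ (-(n : ℝ)) • L)
    (z : EuclideanSpace ℝ (Fin n)) (hz : z ∈ ((n : ℝ) / ((n : ℝ) + 1)) • L)
    (t : ℝ) (ht0 : 0 ≤ t) (ht1 : t ≤ 1) :
    modConv (polarSet ((fun w => w - z) '' L)) t ≥
      modConv (polarSet L) (t / (4 * (n : ℝ) ^ 3)) / (2 * (n : ℝ)) := by
  classical
  set N : ℝ := (n : ℝ) with hNdef
  have hN1 : (1 : ℝ) ≤ N := by rw [hNdef]; exact_mod_cast hn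
  have hN0 : (0 : ℝ) < N := lt_of_lt_of_le one_pos hN1
  have hN1p : (0 : ℝ) < N + 1 := by linarith
  -- basic sets
  have h0L : (0 : EuclideanSpace ℝ (Fin n)) ∈ L := interior_subset h0
  have hLne : L.Nonempty := ⟨0, h0L⟩
  set L' : Set (EuclideanSpace ℝ (Fin n)) := (fun w => w - z) '' L with hL'def
  have hL'c : IsCompact L' := hLcomp.image (continuous_id.sub continuous_const)
  have hL'ne : L'.Nonempty := hLne.image _
  set H : EuclideanSpace ℝ (Fin n) → ℝ := hsup L with hHdef
  set G : EuclideanSpace ℝ (Fin n) → ℝ := hsup L' with hGdef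
  have Geq : ∀ P, G P = H P - (inner ℝ P z : ℝ) := fun P => hsup_translate hLcomp hLne z P
  have Hnn : ∀ P, 0 ≤ H P := by
    intro P
    have := inner_le_hsup hLcomp (x := P) h0L
    simpa using this
  -- z facts
  obtain ⟨ζ, hζL, hζ⟩ := hz
  have hcoef : (0:ℝ) ≤ N / (N + 1) := le_of_lt (div_pos hN0 hN1p)
  have hcoef1 : N / (N + 1) ≤ 1 := by
    rw [div_le_one hN1p]; linarith
  have hzL : z ∈ L := by
    rw [← hζ]
    exact hLconv.smul_mem_of_zero_mem h0L hζL ⟨hcoef, hcoef1⟩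
  have hnegz : (-(N⁻¹)) • z ∈ L := by
    obtain ⟨u, huL, hu⟩ := hLn hζL
    have huζ : (-(N⁻¹)) • ζ = u := by
      rw [← hu, smul_smul]
      rw [show (-(N⁻¹)) * (-N) = 1 by field_simp]
      rw [one_smul]
    have : (-(N⁻¹)) • z = (N / (N + 1)) • ((-(N⁻¹)) • ζ) := by
      rw [← hζ, smul_comm]
    rw [this, huζ]
    exact hLconv.smul_mem_of_zero_mem h0L huL ⟨hcoef, hcoef1⟩
  have lup : ∀ P, (inner ℝ P z : ℝ) ≤ N / (N + 1) * H P := by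
    intro P
    rw [← hζ, real_inner_smul_right]
    exact mul_le_mul_of_nonneg_left (inner_le_hsup hLcomp hζL) hcoef
  have Hneg : ∀ P, H (-P) ≤ N * H P := by
    intro P
    refine hsup_le hLne fun y hy => ?_
    obtain ⟨u, huL, hu⟩ := hLn hy
    rw [← hu, real_inner_smul_right, inner_neg_left]
    have : (inner ℝ P u : ℝ) ≤ H P := inner_le_hsup hLcomp huL
    nlinarith [Hnn P]
  have llow : ∀ P, -(N / (N + 1)) * G P ≤ (inner ℝ P z : ℝ) := by
    intro P
    have hq : ((-(N⁻¹)) • z - z) ∈ L' := ⟨(-(N⁻¹)) • z, hnegz, rfl⟩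
    have h1 : (inner ℝ P ((-(N⁻¹)) • z - z) : ℝ) ≤ G P := inner_le_hsup hL'c hq
    rw [inner_sub_right, real_inner_smul_right] at h1
    have hNne : N ≠ 0 := ne_of_gt hN0
    have h2 := mul_le_mul_of_nonneg_left h1 hN0.le
    have h3 : N * (-N⁻¹ * (inner ℝ P z : ℝ) - (inner ℝ P z : ℝ)) = -(N+1) * (inner ℝ P z : ℝ) := by
      field_simp; ring
    rw [h3] at h2
    rw [neg_mul, neg_le]
    rw [div_mul_eq_mul_div, le_div_iff₀ hN1p]
    linarith [h2]
  have Gnn : ∀ P, 0 ≤ G P := by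
    intro P
    rw [Geq]
    have := lup P
    have h2 : N / (N+1) * H P ≤ 1 * H P := mul_le_mul_of_nonneg_right hcoef1 (Hnn P)
    linarith
  have gK : ∀ P, gauge (polarSet L) P = H P := fun P => gauge_polar hLcomp hLne (Hnn P)
  have gK' : ∀ P, gauge (polarSet L') P = G P := fun P => gauge_polar hL'c hL'ne (Gnn P)
  have memK : ∀ P, P ∈ polarSet L ↔ H P ≤ 1 := fun P => mem_polar_iff hLcomp hLne P
  have memK' : ∀ P, P ∈ polarSet L' ↔ G P ≤ 1 := fun P => mem_polar_iff hL'c hL'ne P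
  have Hsmul : ∀ (c : ℝ), 0 ≤ c → ∀ P, H (c • P) = c * H P :=
    fun c hc P => hsup_smul hLcomp hLne hc P
  have Hcomb : ∀ (c₁ c₂ : ℝ), 0 ≤ c₁ → 0 ≤ c₂ → ∀ P Q,
      H (c₁ • P + c₂ • Q) ≤ c₁ * H P + c₂ * H Q :=
    fun c₁ c₂ h1 h2 P Q => hsup_comb hLcomp hLne h1 h2 P Q
  have Hadd : ∀ P Q, H (P + Q) ≤ H P + H Q :=
    fun P Q => hsup_add_le hLcomp hLne P Q
  have Gsmul : ∀ (c : ℝ), 0 ≤ c → ∀ P, G (c • P) = c * G P :=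
    fun c hc P => hsup_smul hL'c hL'ne hc P
  have Gcomb : ∀ (c₁ c₂ : ℝ), 0 ≤ c₁ → 0 ≤ c₂ → ∀ P Q,
      G (c₁ • P + c₂ • Q) ≤ c₁ * G P + c₂ * G Q :=
    fun c₁ c₂ h1 h2 P Q => hsup_comb hL'c hL'ne h1 h2 P Q
  have Hz : ∀ P, (inner ℝ P z : ℝ) ≤ H P := fun P => inner_le_hsup hLcomp hzL
  -- a distinguished boundary direction
  set e : EuclideanSpace ℝ (Fin n) := EuclideanSpace.single (⟨0, hn⟩ : Fin n) (1:ℝ) with hedef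
  have He_pos : 0 < H e := by
    obtain ⟨r, hr0, hball⟩ := Metric.mem_nhds_iff.mp (mem_interior_iff_mem_nhds.mp h0)
    have hmem : (r/2) • e ∈ L := by
      apply hball
      rw [Metric.mem_ball, dist_zero_right, norm_smul, hedef, EuclideanSpace.norm_single]
      simp only [Real.norm_eq_abs, norm_one, mul_one]
      rw [abs_of_pos (by linarith)]
      linarith
    have h1 : (inner ℝ e ((r/2) • e) : ℝ) ≤ H e := inner_le_hsup hLcomp hmem
    rw [real_inner_smul_right, real_inner_self_eq_norm_sq, hedef,
        EuclideanSpace.norm_single] at h1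
    simp only [norm_one, one_pow, mul_one] at h1
    linarith
  have Ge_pos : 0 < G e := by
    rw [Geq]
    have h1 := lup e
    have h2 : N / (N+1) * H e < 1 * H e := by
      apply mul_lt_mul_of_pos_right _ He_pos
      rw [div_lt_one hN1p]; linarith
    linarith
  set t' : ℝ := t / (4 * N ^ 3) with ht'def
  have hN3 : (0:ℝ) < 4 * N ^ 3 := by positivity
  have ht'0 : 0 ≤ t' := div_nonneg ht0 hN3.le
  have ht'le : t' ≤ 1 := by
    rw [ht'def, div_le_one hN3]
    have h3 : (1:ℝ) ≤ N^3 := by nlinarith [sq_nonneg N, sq_nonneg (N-1)]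
    linarith
  -- bddBelow for the K-set
  have Sbdd : BddBelow {s : ℝ | ∃ x ∈ polarSet L, ∃ y ∈ polarSet L,
      t' ≤ gauge (polarSet L) (x - y) ∧ s = 1 - gauge (polarSet L) ((2 : ℝ)⁻¹ • (x + y))} := by
    refine ⟨0, ?_⟩
    rintro s ⟨p, hp, q, hq, _, rfl⟩
    rw [gK]
    have h1 : H ((2:ℝ)⁻¹ • (p + q)) ≤ (2:ℝ)⁻¹ * H p + (2:ℝ)⁻¹ * H q := by
      have h2 := Hcomb 2⁻¹ 2⁻¹ (by norm_num) (by norm_num) p q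
      rw [← smul_add] at h2
      exact h2
    have hp1 := (memK p).1 hp
    have hq1 := (memK q).1 hq
    linarith
  have dle : ∀ p q : EuclideanSpace ℝ (Fin n), H p ≤ 1 → H q ≤ 1 → t' ≤ H (p - q) →
      modConv (polarSet L) t' ≤ 1 - H ((2:ℝ)⁻¹ • (p + q)) := by
    intro p q hp hq hd
    apply csInf_le Sbdd
    refine ⟨p, (memK p).2 hp, q, (memK q).2 hq, ?_, ?_⟩
    · rw [gK]; exact hd
    · rw [gK]
  -- radial pair: modConv (polarSet L) t' ≤ t'/2
  have hrad : modConv (polarSet L) t' ≤ t' / 2 := by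
    set P₀ : EuclideanSpace ℝ (Fin n) := (H e)⁻¹ • e with hP₀def
    have hHP₀ : H P₀ = 1 := by
      rw [hP₀def, Hsmul _ (inv_nonneg.2 He_pos.le)]
      field_simp
    have h1 : H (P₀ - (1 - t') • P₀) = t' := by
      have hv : P₀ - (1 - t') • P₀ = t' • P₀ := by module
      rw [hv, Hsmul _ ht'0, hHP₀, mul_one]
    have h2 : H ((1 - t') • P₀) = 1 - t' := by
      rw [Hsmul _ (by linarith : (0:ℝ) ≤ 1 - t'), hHP₀, mul_one]
    have h3 : (2:ℝ)⁻¹ • (P₀ + (1 - t') • P₀) = ((2 - t')/2) • P₀ := by module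
    have h4 := dle P₀ ((1 - t') • P₀) (le_of_eq hHP₀) (by linarith) (le_of_eq h1.symm)
    rw [h3, Hsmul _ (by linarith : (0:ℝ) ≤ (2 - t')/2), hHP₀, mul_one] at h4
    linarith
  have lup2 : ∀ P, (N+1) * (inner ℝ P z : ℝ) ≤ N * H P := by
    intro P
    have h1 := lup P
    have h2 := mul_le_mul_of_nonneg_left h1 hN1p.le
    have h3 : (N+1) * (N/(N+1) * H P) = N * H P := by field_simp
    rwa [h3] at h2
  have llow2 : ∀ P, -(N * G P) ≤ (N+1) * (inner ℝ P z : ℝ) := by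
    intro P
    have h1 := llow P
    have h2 := mul_le_mul_of_nonneg_left h1 hN1p.le
    have h3 : (N+1) * (-(N/(N+1)) * G P) = -(N * G P) := by
      field_simp
    rwa [h3] at h2
  -- depth lemma
  have depth : ∀ x y : EuclideanSpace ℝ (Fin n), G x ≤ 1 → G y ≤ 1 →
      (inner ℝ x z : ℝ) ≤ (inner ℝ y z : ℝ) →
      (1 + (inner ℝ x z : ℝ)) * (1 - H ((2:ℝ)⁻¹ • ((1 + (inner ℝ x z : ℝ))⁻¹ • x + (1 + (inner ℝ y z : ℝ))⁻¹ • y))) ≤ 1 - G ((2:ℝ)⁻¹ • (x + y)) := by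
    intro x y hgx hgy hxy
    have hNgx : N * G x ≤ N * 1 := mul_le_mul_of_nonneg_left hgx hN0.le
    have ha1 : 1 ≤ (N+1) * (1 + (inner ℝ x z : ℝ)) := by nlinarith [llow2 x]
    have ha0 : (0:ℝ) < (1 + (inner ℝ x z : ℝ)) := by nlinarith
    have hd0 : (0:ℝ) < (1 + (inner ℝ y z : ℝ)) := by linarith
    have hv : (2:ℝ)⁻¹ • (x + y)
        = (1 + (inner ℝ x z : ℝ)) • ((2:ℝ)⁻¹ • ((1 + (inner ℝ x z : ℝ))⁻¹ • x + (1 + (inner ℝ y z : ℝ))⁻¹ • y)) + (((1 + (inner ℝ y z : ℝ)) - (1 + (inner ℝ x z : ℝ)))/2) • ((1 + (inner ℝ y z : ℝ))⁻¹ • y) :=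
      vec_id1 x y _ _ (ne_of_gt ha0) (ne_of_gt hd0)
    have hHm : H ((2:ℝ)⁻¹ • (x + y))
        ≤ (1 + (inner ℝ x z : ℝ)) * H ((2:ℝ)⁻¹ • ((1 + (inner ℝ x z : ℝ))⁻¹ • x + (1 + (inner ℝ y z : ℝ))⁻¹ • y)) + (((1 + (inner ℝ y z : ℝ)) - (1 + (inner ℝ x z : ℝ)))/2) * H ((1 + (inner ℝ y z : ℝ))⁻¹ • y) := by
      rw [hv]
      exact Hcomb _ _ ha0.le (by linarith) _ _
    have hHyd : H y ≤ (1 + (inner ℝ y z : ℝ)) := by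
      have h1 := Geq y
      linarith
    have hHv : H ((1 + (inner ℝ y z : ℝ))⁻¹ • y) ≤ 1 := by
      rw [Hsmul _ (inv_nonneg.2 hd0.le)]
      have h2 := mul_le_mul_of_nonneg_left hHyd (inv_nonneg.2 hd0.le)
      rwa [inv_mul_cancel₀ (ne_of_gt hd0)] at h2
    have hGm : G ((2:ℝ)⁻¹ • (x + y))
        = H ((2:ℝ)⁻¹ • (x + y)) - ((inner ℝ x z : ℝ) + (inner ℝ y z : ℝ))/2 := by
      rw [Geq]
      have h1 : (inner ℝ ((2:ℝ)⁻¹ • (x + y)) z : ℝ)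
          = ((inner ℝ x z : ℝ) + (inner ℝ y z : ℝ))/2 := by
        rw [real_inner_smul_left, inner_add_left]; ring
      rw [h1]
    have hco : (((1 + (inner ℝ y z : ℝ)) - (1 + (inner ℝ x z : ℝ)))/2) * H ((1 + (inner ℝ y z : ℝ))⁻¹ • y) ≤ ((1 + (inner ℝ y z : ℝ)) - (1 + (inner ℝ x z : ℝ)))/2 := by
      have h2 : (0:ℝ) ≤ ((1 + (inner ℝ y z : ℝ)) - (1 + (inner ℝ x z : ℝ)))/2 := by linarith
      nlinarith
    nlinarith [hHm, hGm, hco]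
  -- the per-element core bound for n ≥ 2
  have core : (2:ℝ) ≤ N → ∀ x y : EuclideanSpace ℝ (Fin n), G x ≤ 1 → G y ≤ 1 →
      t ≤ G (x - y) →
      modConv (polarSet L) t' / (2 * N) ≤ 1 - G ((2:ℝ)⁻¹ • (x + y)) := by
    intro hN2 x y hgx hgy hdist
    have hNgx : N * G x ≤ N * 1 := mul_le_mul_of_nonneg_left hgx hN0.le
    have hNgy : N * G y ≤ N * 1 := mul_le_mul_of_nonneg_left hgy hN0.le
    have ha1 : 1 ≤ (N+1) * (1 + (inner ℝ x z : ℝ)) := by nlinarith [llow2 x]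
    have hd1 : 1 ≤ (N+1) * (1 + (inner ℝ y z : ℝ)) := by nlinarith [llow2 y]
    have ha0 : (0:ℝ) < (1 + (inner ℝ x z : ℝ)) := by nlinarith
    have hd0 : (0:ℝ) < (1 + (inner ℝ y z : ℝ)) := by nlinarith
    have hHxa : H x ≤ (1 + (inner ℝ x z : ℝ)) := by have h1 := Geq x; linarith
    have hHyd : H y ≤ (1 + (inner ℝ y z : ℝ)) := by have h1 := Geq y; linarith
    have haN : (1 + (inner ℝ x z : ℝ)) ≤ N + 1 := by
      have h1 := lup2 x
      have h2 := Geq x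
      nlinarith
    have hdN : (1 + (inner ℝ y z : ℝ)) ≤ N + 1 := by
      have h1 := lup2 y
      have h2 := Geq y
      nlinarith
    have hHu : H ((1 + (inner ℝ x z : ℝ))⁻¹ • x) ≤ 1 := by
      rw [Hsmul _ (inv_nonneg.2 ha0.le)]
      have h2 := mul_le_mul_of_nonneg_left hHxa (inv_nonneg.2 ha0.le)
      rwa [inv_mul_cancel₀ (ne_of_gt ha0)] at h2
    have hHv : H ((1 + (inner ℝ y z : ℝ))⁻¹ • y) ≤ 1 := by
      rw [Hsmul _ (inv_nonneg.2 hd0.le)]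
      have h2 := mul_le_mul_of_nonneg_left hHyd (inv_nonneg.2 hd0.le)
      rwa [inv_mul_cancel₀ (ne_of_gt hd0)] at h2
    have heps0 : 0 ≤ (1 - G ((2:ℝ)⁻¹ • (x + y))) := by
      have h1 := Gcomb 2⁻¹ 2⁻¹ (by norm_num) (by norm_num) x y
      rw [← smul_add] at h1
      linarith
    have hHsub : t + ((inner ℝ x z:ℝ) - (inner ℝ y z:ℝ)) ≤ H (x - y) := by
      have h1 := Geq (x - y)
      have h2 : (inner ℝ (x - y) z : ℝ) = (inner ℝ x z:ℝ) - (inner ℝ y z:ℝ) := inner_sub_left x y z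
      rw [h2] at h1
      linarith
    have hdepth : 1 - H ((2:ℝ)⁻¹ • ((1 + (inner ℝ x z : ℝ))⁻¹ • x + (1 + (inner ℝ y z : ℝ))⁻¹ • y)) ≤ (N + 1) * (1 - G ((2:ℝ)⁻¹ • (x + y))) := by
      rcases le_total (inner ℝ x z : ℝ) (inner ℝ y z : ℝ) with hxy | hxy
      · have h := depth x y hgx hgy hxy
        rcases le_or_gt (1 - H ((2:ℝ)⁻¹ • ((1 + (inner ℝ x z : ℝ))⁻¹ • x + (1 + (inner ℝ y z : ℝ))⁻¹ • y))) 0 with h2 | h2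
        · nlinarith
        · nlinarith [mul_le_mul_of_nonneg_right ha1 h2.le]
      · have h := depth y x hgy hgx hxy
        rw [show (1 + (inner ℝ y z : ℝ))⁻¹ • y + (1 + (inner ℝ x z : ℝ))⁻¹ • x = (1 + (inner ℝ x z : ℝ))⁻¹ • x + (1 + (inner ℝ y z : ℝ))⁻¹ • y from add_comm _ _,
            show y + x = x + y from add_comm _ _] at h
        rcases le_or_gt (1 - H ((2:ℝ)⁻¹ • ((1 + (inner ℝ x z : ℝ))⁻¹ • x + (1 + (inner ℝ y z : ℝ))⁻¹ • y))) 0 with h2 | h2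
        · nlinarith
        · nlinarith [mul_le_mul_of_nonneg_right hd1 h2.le]
    have hpair : modConv (polarSet L) t' ≤ 1 - H ((2:ℝ)⁻¹ • ((1 + (inner ℝ x z : ℝ))⁻¹ • x + (1 + (inner ℝ y z : ℝ))⁻¹ • y)) := by
      rcases le_total (inner ℝ y z : ℝ) (inner ℝ x z : ℝ) with hll | hll
      · -- difference has nonneg z-weight : pair (u,v) via support functional of x-y
        have hid : x - y = (1 + (inner ℝ x z : ℝ)) • ((1 + (inner ℝ x z : ℝ))⁻¹ • x - (1 + (inner ℝ y z : ℝ))⁻¹ • y) + (((1 + (inner ℝ x z : ℝ)) - (1 + (inner ℝ y z : ℝ)))/(1 + (inner ℝ y z : ℝ))) • y :=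
          vec_id2 x y _ _ (ne_of_gt ha0) (ne_of_gt hd0)
        have hcd : (0:ℝ) ≤ ((1 + (inner ℝ x z : ℝ)) - (1 + (inner ℝ y z : ℝ)))/(1 + (inner ℝ y z : ℝ)) := div_nonneg (by linarith) hd0.le
        have h1 : H (x - y) ≤ (1 + (inner ℝ x z : ℝ)) * H ((1 + (inner ℝ x z : ℝ))⁻¹ • x - (1 + (inner ℝ y z : ℝ))⁻¹ • y) + (((1 + (inner ℝ x z : ℝ)) - (1 + (inner ℝ y z : ℝ)))/(1 + (inner ℝ y z : ℝ))) * H y := by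
          rw [hid]
          exact Hcomb _ _ ha0.le hcd _ _
        have h2 : (((1 + (inner ℝ x z : ℝ)) - (1 + (inner ℝ y z : ℝ)))/(1 + (inner ℝ y z : ℝ))) * H y ≤ (1 + (inner ℝ x z : ℝ)) - (1 + (inner ℝ y z : ℝ)) := by
          have h3 := mul_le_mul_of_nonneg_left hHyd hcd
          have h4 : (((1 + (inner ℝ x z : ℝ)) - (1 + (inner ℝ y z : ℝ)))/(1 + (inner ℝ y z : ℝ))) * (1 + (inner ℝ y z : ℝ)) = (1 + (inner ℝ x z : ℝ)) - (1 + (inner ℝ y z : ℝ)) := scal_id3 _ _ (ne_of_gt hd0)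
          linarith
        have h4 : t ≤ (1 + (inner ℝ x z : ℝ)) * H ((1 + (inner ℝ x z : ℝ))⁻¹ • x - (1 + (inner ℝ y z : ℝ))⁻¹ • y) := by linarith
        have hat : (1 + (inner ℝ x z : ℝ)) * t' ≤ t := by
          have h5 : (1 + (inner ℝ x z : ℝ)) * t' ≤ (N+1) * t' := mul_le_mul_of_nonneg_right haN ht'0
          have h6 : (N+1) * t' ≤ (4*N^3) * t' := by
            apply mul_le_mul_of_nonneg_right _ ht'0
            nlinarith [hN1, sq_nonneg (N-1), sq_nonneg N]
          have h7 : (4*N^3) * t' = t := by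
            rw [ht'def]; field_simp
          linarith
        have h5 : t' ≤ H ((1 + (inner ℝ x z : ℝ))⁻¹ • x - (1 + (inner ℝ y z : ℝ))⁻¹ • y) := by
          have h6 : (1 + (inner ℝ x z : ℝ)) * t' ≤ (1 + (inner ℝ x z : ℝ)) * H ((1 + (inner ℝ x z : ℝ))⁻¹ • x - (1 + (inner ℝ y z : ℝ))⁻¹ • y) := by linarith
          exact le_of_mul_le_mul_left h6 ha0
        exact dle _ _ hHu hHv h5
      · rcases le_or_gt ((1 + (inner ℝ x z : ℝ)) * (1 + (inner ℝ y z : ℝ)) * t') ((1 + (inner ℝ y z : ℝ)) - (1 + (inner ℝ x z : ℝ))) with hbig | hsmall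
        · -- pair (v,u) via the z functional
          have h1 : (inner ℝ ((1 + (inner ℝ y z : ℝ))⁻¹ • y - (1 + (inner ℝ x z : ℝ))⁻¹ • x) z : ℝ)
              = (1 + (inner ℝ y z : ℝ))⁻¹ * (inner ℝ y z:ℝ) - (1 + (inner ℝ x z : ℝ))⁻¹ * (inner ℝ x z:ℝ) := by
            rw [inner_sub_left, real_inner_smul_left, real_inner_smul_left]
          have h4 : (1 + (inner ℝ y z : ℝ))⁻¹ * (inner ℝ y z:ℝ) - (1 + (inner ℝ x z : ℝ))⁻¹ * (inner ℝ x z:ℝ) = (1 + (inner ℝ x z : ℝ))⁻¹ - (1 + (inner ℝ y z : ℝ))⁻¹ :=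
            scal_id1 (inner ℝ x z) (inner ℝ y z) (ne_of_gt ha0) (ne_of_gt hd0)
          have h5 : t' ≤ (1 + (inner ℝ x z : ℝ))⁻¹ - (1 + (inner ℝ y z : ℝ))⁻¹ := by
            have h6 : (1 + (inner ℝ x z : ℝ))⁻¹ - (1 + (inner ℝ y z : ℝ))⁻¹ = ((1 + (inner ℝ y z : ℝ)) - (1 + (inner ℝ x z : ℝ)))/((1 + (inner ℝ x z : ℝ)) * (1 + (inner ℝ y z : ℝ))) :=
              scal_id2 _ _ (ne_of_gt ha0) (ne_of_gt hd0)
            rw [h6, le_div_iff₀ (by positivity)]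
            nlinarith [hbig]
          have h2 : t' ≤ H ((1 + (inner ℝ y z : ℝ))⁻¹ • y - (1 + (inner ℝ x z : ℝ))⁻¹ • x) := by
            have h3 := Hz ((1 + (inner ℝ y z : ℝ))⁻¹ • y - (1 + (inner ℝ x z : ℝ))⁻¹ • x)
            rw [h1, h4] at h3
            linarith
          have h7 := dle _ _ hHv hHu h2
          rw [show (1 + (inner ℝ y z : ℝ))⁻¹ • y + (1 + (inner ℝ x z : ℝ))⁻¹ • x = (1 + (inner ℝ x z : ℝ))⁻¹ • x + (1 + (inner ℝ y z : ℝ))⁻¹ • y from add_comm _ _] at h7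
          exact h7
        · -- the collapse-free small case
          have hid2 : x - y = (1 + (inner ℝ x z : ℝ)) • ((1 + (inner ℝ x z : ℝ))⁻¹ • x - (1 + (inner ℝ y z : ℝ))⁻¹ • y) + (((1 + (inner ℝ y z : ℝ)) - (1 + (inner ℝ x z : ℝ)))/(1 + (inner ℝ y z : ℝ))) • (-y) :=
            vec_id3 x y _ _ (ne_of_gt ha0) (ne_of_gt hd0)
          have hcd : (0:ℝ) ≤ ((1 + (inner ℝ y z : ℝ)) - (1 + (inner ℝ x z : ℝ)))/(1 + (inner ℝ y z : ℝ)) := div_nonneg (by linarith) hd0.le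
          have h1 : H (x - y) ≤ (1 + (inner ℝ x z : ℝ)) * H ((1 + (inner ℝ x z : ℝ))⁻¹ • x - (1 + (inner ℝ y z : ℝ))⁻¹ • y) + (((1 + (inner ℝ y z : ℝ)) - (1 + (inner ℝ x z : ℝ)))/(1 + (inner ℝ y z : ℝ))) * H (-y) := by
            rw [hid2]
            exact Hcomb _ _ ha0.le hcd _ _
          have h2 : H (-y) ≤ N * (1 + (inner ℝ y z : ℝ)) :=
            le_trans (Hneg y) (mul_le_mul_of_nonneg_left hHyd hN0.le)
          have h3 : (((1 + (inner ℝ y z : ℝ)) - (1 + (inner ℝ x z : ℝ)))/(1 + (inner ℝ y z : ℝ))) * H (-y) ≤ N * ((1 + (inner ℝ y z : ℝ)) - (1 + (inner ℝ x z : ℝ))) := by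
            have h4 := mul_le_mul_of_nonneg_left h2 hcd
            have h5 : (((1 + (inner ℝ y z : ℝ)) - (1 + (inner ℝ x z : ℝ)))/(1 + (inner ℝ y z : ℝ))) * (N * (1 + (inner ℝ y z : ℝ))) = N * ((1 + (inner ℝ y z : ℝ)) - (1 + (inner ℝ x z : ℝ))) := scal_id4 _ _ _ (ne_of_gt hd0)
            linarith
          have h4 : t - (N+1) * ((1 + (inner ℝ y z : ℝ)) - (1 + (inner ℝ x z : ℝ))) ≤ (1 + (inner ℝ x z : ℝ)) * H ((1 + (inner ℝ x z : ℝ))⁻¹ • x - (1 + (inner ℝ y z : ℝ))⁻¹ • y) := by linarith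
          have h6 : (1 + (inner ℝ x z : ℝ)) * t' + (N+1) * ((1 + (inner ℝ x z : ℝ)) * (1 + (inner ℝ y z : ℝ)) * t') ≤ t := by
            have h7 : (1 + (inner ℝ x z : ℝ)) * (1 + (N+1) * (1 + (inner ℝ y z : ℝ))) ≤ (N+1) * (1 + (N+1)^2) := by
              nlinarith [mul_le_mul_of_nonneg_left hdN (by linarith : (0:ℝ) ≤ N+1),
                mul_le_mul_of_nonneg_right haN (by nlinarith : (0:ℝ) ≤ 1 + (N+1) * (1 + (inner ℝ y z : ℝ)))]
            have h8 : (N+1) * (1 + (N+1)^2) ≤ 4 * N^3 := by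
              nlinarith [hN2, sq_nonneg N, sq_nonneg (N-2), sq_nonneg (N-1)]
            have h9 : ((1 + (inner ℝ x z : ℝ)) * (1 + (N+1)*(1 + (inner ℝ y z : ℝ)))) * t' ≤ (4*N^3) * t' := by
              apply mul_le_mul_of_nonneg_right _ ht'0
              linarith
            have h10 : (4*N^3) * t' = t := by
              rw [ht'def]; field_simp
            nlinarith [h9]
          have h5 : t' ≤ H ((1 + (inner ℝ x z : ℝ))⁻¹ • x - (1 + (inner ℝ y z : ℝ))⁻¹ • y) := by
            have h11 : (1 + (inner ℝ x z : ℝ)) * t' ≤ (1 + (inner ℝ x z : ℝ)) * H ((1 + (inner ℝ x z : ℝ))⁻¹ • x - (1 + (inner ℝ y z : ℝ))⁻¹ • y) := by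
              nlinarith [mul_le_mul_of_nonneg_left hsmall.le (by linarith : (0:ℝ) ≤ N+1)]
            exact le_of_mul_le_mul_left h11 ha0
          exact dle _ _ hHu hHv h5
    have hfin : modConv (polarSet L) t' ≤ 2*N * (1 - G ((2:ℝ)⁻¹ • (x + y))) := by
      nlinarith [hpair, hdepth, heps0]
    rw [div_le_iff₀ (by positivity : (0:ℝ) < 2*N)]
    nlinarith [hfin]
  -- final assembly
  rw [ge_iff_le]
  have hS'ne : Set.Nonempty {s : ℝ | ∃ x ∈ polarSet L', ∃ y ∈ polarSet L',
      t ≤ gauge (polarSet L') (x - y) ∧ s = 1 - gauge (polarSet L') ((2:ℝ)⁻¹ • (x + y))} := by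
    refine ⟨_, (G e)⁻¹ • e, ?_, 0, ?_, ?_, rfl⟩
    · rw [memK', Gsmul _ (inv_nonneg.2 Ge_pos.le), inv_mul_cancel₀ (ne_of_gt Ge_pos)]
    · rw [memK']
      have h1 : G (0 : EuclideanSpace ℝ (Fin n)) = 0 := hsup_zero hL'ne
      rw [h1]
      norm_num
    · rw [sub_zero, gK', Gsmul _ (inv_nonneg.2 Ge_pos.le), inv_mul_cancel₀ (ne_of_gt Ge_pos)]
      exact ht1
  refine le_csInf hS'ne ?_
  rintro s ⟨x, hx, y, hy, hdist, rfl⟩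
  rw [gK'] at hdist
  rw [gK']
  have hgx := (memK' x).1 hx
  have hgy := (memK' y).1 hy
  rcases eq_or_lt_of_le hn with h1 | h2
  · -- dimension 1
    subst h1
    have hNeq : N = 1 := by rw [hNdef]; norm_num
    have ht'eq : t' = t / 4 := by rw [ht'def, hNeq]; norm_num
    have honeD : ∀ v : EuclideanSpace ℝ (Fin 1), v = (v ⟨0, hn⟩) • e := by
      intro v
      ext i
      have hi : i = ⟨0, hn⟩ := Fin.ext (by omega)
      subst hi
      simp [hedef, EuclideanSpace.single_apply]
    obtain ⟨ξ, hξdef⟩ : ∃ c : ℝ, x ⟨0, hn⟩ = c := ⟨_, rfl⟩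
    obtain ⟨υ, hυdef⟩ : ∃ c : ℝ, y ⟨0, hn⟩ = c := ⟨_, rfl⟩
    have hxx : x = ξ • e := by rw [← hξdef]; exact honeD x
    have hyy : y = υ • e := by rw [← hυdef]; exact honeD y
    have hsub : x - y = (ξ - υ) • e := by rw [hxx, hyy, ← sub_smul]
    have hm : (2:ℝ)⁻¹ • (x + y) = ((ξ + υ)/2) • e := by
      rw [hxx, hyy, ← add_smul, smul_smul]
      congr 1
      ring
    have hGpos : ∀ c : ℝ, 0 ≤ c → G (c • e) = c * G e := fun c hc => Gsmul c hc e
    have hGneg : ∀ c : ℝ, c ≤ 0 → G (c • e) = (-c) * G (-e) := by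
      intro c hc
      rw [show c • e = (-c) • (-e) from by rw [neg_smul_neg], Gsmul _ (by linarith) (-e)]
    have hHee : H (-e) = H e := by
      have h1 := Hneg e
      have h2 := Hneg (-e)
      rw [neg_neg] at h2
      rw [hNeq] at h1 h2
      linarith
    have hinne : (inner ℝ (-e) z : ℝ) = -(inner ℝ e z : ℝ) := inner_neg_left e z
    have hle1 : (inner ℝ e z : ℝ) ≤ H e / 2 := by
      have h1 := lup2 e
      rw [hNeq] at h1
      linarith
    have hle2 : -(inner ℝ e z : ℝ) ≤ H e / 2 := by
      have h1 := lup2 (-e)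
      rw [hNeq, hHee, hinne] at h1
      linarith
    have hQ : G e = H e - (inner ℝ e z:ℝ) := Geq e
    have hPp : G (-e) = H e + (inner ℝ e z:ℝ) := by
      rw [Geq, hHee, hinne]
      ring
    have hPp0 : 0 < G (-e) := by rw [hPp]; linarith [He_pos]
    have hP3Q : G (-e) ≤ 3 * G e := by rw [hPp, hQ]; linarith [He_pos]
    have hQ3P : G e ≤ 3 * G (-e) := by rw [hPp, hQ]; linarith [He_pos]
    rw [hm]
    rw [hsub] at hdist
    rw [hxx] at hgx
    rw [hyy] at hgy
    have key16 : t/6 ≤ 1 - G (((ξ + υ)/2) • e) := by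
      rcases le_total υ ξ with hc1 | hc1
      · rw [hGpos _ (by linarith : (0:ℝ) ≤ ξ - υ)] at hdist
        rcases le_total 0 (ξ + υ) with hc2 | hc2
        · rw [hGpos _ (by linarith : (0:ℝ) ≤ ξ)] at hgx
          rw [hGpos _ (by linarith : (0:ℝ) ≤ (ξ + υ)/2)]
          nlinarith [hdist, hgx, ht0]
        · rw [hGneg _ (by linarith : υ ≤ 0)] at hgy
          rw [hGneg _ (by linarith : (ξ + υ)/2 ≤ 0)]
          nlinarith [hdist, hgy, ht0,
            mul_le_mul_of_nonneg_left hQ3P (by linarith : (0:ℝ) ≤ ξ - υ)]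
      · rw [hGneg _ (by linarith : ξ - υ ≤ 0)] at hdist
        rcases le_total 0 (ξ + υ) with hc2 | hc2
        · rw [hGpos _ (by linarith : (0:ℝ) ≤ υ)] at hgy
          rw [hGpos _ (by linarith : (0:ℝ) ≤ (ξ + υ)/2)]
          nlinarith [hdist, hgy, ht0,
            mul_le_mul_of_nonneg_left hP3Q (by linarith : (0:ℝ) ≤ υ - ξ)]
        · rw [hGneg _ (by linarith : ξ ≤ 0)] at hgx
          rw [hGneg _ (by linarith : (ξ + υ)/2 ≤ 0)]
          nlinarith [hdist, hgx, ht0]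
    rw [hNeq]
    have h9 : modConv (polarSet L) t' ≤ t/8 := by
      have h8 : t' / 2 = t / 8 := by rw [ht'eq]; ring
      linarith [hrad, h8.le, h8.ge]
    rw [show (2:ℝ) * 1 = 2 by norm_num, div_le_iff₀ (by norm_num : (0:ℝ) < 2)]
    nlinarith [key16, ht0, h9]
  · have hN2 : (2:ℝ) ≤ N := by
      rw [hNdef]
      exact_mod_cast h2
    exact core hN2 x y hgx hgy hdist

theorem modConv_polar_translate_ge_general {n : ℕ} (L : Set (EuclideanSpace ℝ (Fin n)))
    (hLcomp : IsCompact L) (hLconv : Convex ℝ L) (h0 : 0 ∈ interior L)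
    (hLn : L ⊆ (-(n : ℝ)) • L)
    (z : EuclideanSpace ℝ (Fin n)) (hz : z ∈ ((n : ℝ) / ((n : ℝ) + 1)) • L)
    (t : ℝ) (ht0 : 0 ≤ t) (ht1 : t ≤ 1) :
    modConv (polarSet ((fun w => w - z) '' L)) t ≥
      modConv (polarSet L) (t / (4 * (n : ℝ) ^ 3)) / (2 * (n : ℝ)) := by
  rcases Nat.eq_zero_or_pos n with hn0 | hnpos
  · subst hn0
    haveI : Subsingleton (EuclideanSpace ℝ (Fin 0)) :=
      ⟨fun a b => PiLp.ext fun i => i.elim0⟩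
    have h2 : ((0:ℕ) : ℝ) = 0 := by norm_num
    rw [ge_iff_le, h2]
    rw [mul_zero, div_zero]
    apply Real.sInf_nonneg
    rintro s ⟨x, hx, y, hy, _, rfl⟩
    have hmid : (2 : ℝ)⁻¹ • (x + y) = 0 := Subsingleton.elim _ _
    rw [hmid, gauge_zero]
    norm_num
  · exact key hnpos L hLcomp hLconv h0 hLn z hz t ht0 ht1
end

section
/- Let n ≥ 2 and suppose γ₁, …, γ_{M} are positive reals summing to 1 with M ≤ n+1, and suppose r ≥ 0 satisfies r < 1/(3n² + n) and for each k, 2r ≥ γ_k − (1−γ_k)/n − (1−γ_k)r. Then M = n + 1 and for each k, (1 + nr − 3n²r)/(n+1+nr) ≤ γ_k ≤ (1 + 3nr)/(n+1+nr). -/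
theorem caratheodory_coefficients_bounds (n M : ℕ) (hn : 2 ≤ n) (hM : M ≤ n + 1)
    (γ : Fin M → ℝ) (hpos : ∀ k, 0 < γ k) (hsum : ∑ k, γ k = 1)
    (r : ℝ) (hr0 : 0 ≤ r) (hr : r < 1 / (3 * (n : ℝ) ^ 2 + n))
    (hineq : ∀ k, 2 * r ≥ γ k - (1 - γ k) / n - (1 - γ k) * r) :
    M = n + 1 ∧ ∀ k,
      (1 + n * r - 3 * (n : ℝ) ^ 2 * r) / (n + 1 + n * r) ≤ γ k ∧
      γ k ≤ (1 + 3 * n * r) / (n + 1 + n * r) := by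
  have hn' : (2:ℝ) ≤ n := by exact_mod_cast hn
  have hnpos : (0:ℝ) < n := by linarith
  have hd : (0:ℝ) < n + 1 + n * r := by positivity
  have hrr : r * (3 * (n:ℝ)^2 + n) < 1 := by
    have hden : (0:ℝ) < 3 * (n:ℝ)^2 + n := by positivity
    rw [lt_div_iff₀ hden] at hr
    linarith
  -- upper bound for all k
  have hub : ∀ k, γ k ≤ (1 + 3 * n * r) / (n + 1 + n * r) := by
    intro k
    rw [le_div_iff₀ hd]
    have h := hineq k
    have hdiv : (1 - γ k) / n * n = 1 - γ k := div_mul_cancel₀ _ (ne_of_gt hnpos)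
    nlinarith [h, hnpos]
  -- M = n + 1
  have hMeq : M = n + 1 := by
    by_contra hne
    have hMle : M ≤ n := by omega
    have hS : ∑ k : Fin M, γ k ≤ M * ((1 + 3 * n * r) / (n + 1 + n * r)) := by
      calc ∑ k : Fin M, γ k ≤ ∑ _k : Fin M, (1 + 3 * n * r) / (n + 1 + n * r) :=
            Finset.sum_le_sum fun k _ => hub k
        _ = M * ((1 + 3 * n * r) / (n + 1 + n * r)) := by
            simp [Finset.sum_const, Finset.card_univ, mul_comm]
    have hsum_le : (1:ℝ) ≤ M * ((1 + 3 * n * r) / (n + 1 + n * r)) := by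
      linarith [hS]
    have hM' : (M:ℝ) ≤ n := by exact_mod_cast hMle
    have hub_pos : 0 < (1 + 3 * n * r) / (n + 1 + n * r) := by positivity
    have : (1:ℝ) ≤ n * ((1 + 3 * n * r) / (n + 1 + n * r)) := by
      have := mul_le_mul_of_nonneg_right hM' (le_of_lt hub_pos)
      linarith
    rw [← mul_div_assoc, le_div_iff₀ hd, one_mul] at this
    nlinarith
  refine ⟨hMeq, fun k => ⟨?_, hub k⟩⟩
  -- lower bound
  have hsum' : γ k = 1 - ∑ j ∈ Finset.univ.erase k, γ j := by
    have := Finset.add_sum_erase Finset.univ γ (Finset.mem_univ k)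
    rw [hsum] at this
    linarith
  have hcard : (Finset.univ.erase k).card = n := by
    rw [Finset.card_erase_of_mem (Finset.mem_univ k), Finset.card_univ, Fintype.card_fin, hMeq]
    omega
  have hrest : ∑ j ∈ Finset.univ.erase k, γ j ≤ n * ((1 + 3 * n * r) / (n + 1 + n * r)) := by
    calc ∑ j ∈ Finset.univ.erase k, γ j
        ≤ ∑ _j ∈ Finset.univ.erase k, (1 + 3 * n * r) / (n + 1 + n * r) :=
          Finset.sum_le_sum fun j _ => hub j
      _ = n * ((1 + 3 * n * r) / (n + 1 + n * r)) := by
          rw [Finset.sum_const, hcard]; ring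
  have hrest' : (∑ j ∈ Finset.univ.erase k, γ j) * (n + 1 + n * r) ≤ n * (1 + 3 * n * r) := by
    rw [← le_div_iff₀ hd]
    calc (∑ j ∈ Finset.univ.erase k, γ j) ≤ n * ((1 + 3 * n * r) / (n + 1 + n * r)) := hrest
      _ = n * (1 + 3 * n * r) / (n + 1 + n * r) := by ring
  rw [hsum', div_le_iff₀ hd]
  nlinarith
end
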